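/- Let H be a separable complex Hilbert space and let P be a bounded idempotent operator on H. If there exists a symmetry J with JPJ = I - P, then the Hilbert space dimension of the range of P equals the Hilbert space dimension of the orthogonal complement of the range of P. -/

import Mathlib

open ContinuousLinearMap

variable {H : Type*} [NormedAddCommGroup H] [InnerProductSpace ℂ H]
  [CompleteSpace H] [TopologicalSpace.SeparableSpace H]

/-- The absolute value `|A| = (A*A)^(1/2)` of a bounded operator. -/
noncomputable def absOp (A : H →L[ℂ] H) : H →L[ℂ] H := CFC.sqrt (star A * A)

/-- A symmetry is a self-adjoint unitary: `J = J* = J⁻¹`. -/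
def IsSymmetry (J : H →L[ℂ] H) : Prop := IsSelfAdjoint J ∧ J * J = 1

section Aux

variable {E F : Type*} [NormedAddCommGroup E] [InnerProductSpace ℂ E] [CompleteSpace E]
  [NormedAddCommGroup F] [InnerProductSpace ℂ F] [CompleteSpace F]

set_option maxHeartbeats 800000 in
/-- Polar decomposition trick: a continuous linear equivalence of Hilbert spaces yields a
linear isometric equivalence. -/
theorem aux_nonempty_isometry_of_equiv (T : E ≃L[ℂ] F) : Nonempty (E ≃ₗᵢ[ℂ] F) := by
  set T' : E →L[ℂ] F := (T : E →L[ℂ] F) with hT'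
  set S' : F →L[ℂ] E := (T.symm : F →L[ℂ] E) with hS'
  set A : E →L[ℂ] E := ContinuousLinearMap.adjoint T' ∘L T' with hA_def
  have hA : 0 ≤ A := by
    rw [ContinuousLinearMap.nonneg_iff_isPositive]
    simpa [hA_def, ContinuousLinearMap.one_def] using (ContinuousLinearMap.isPositive_one (E := F)).adjoint_conj T'
  set R : E →L[ℂ] E := CFC.sqrt A with hR_def
  have hRR : R * R = A := CFC.sqrt_mul_sqrt_self A hA
  have hRsa : IsSelfAdjoint R := IsSelfAdjoint.of_nonneg (CFC.sqrt_nonneg A)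
  have hadjR : ContinuousLinearMap.adjoint R = R := by
    rw [← ContinuousLinearMap.star_eq_adjoint]; exact hRsa.star_eq
  set B : E →L[ℂ] E := S' ∘L ContinuousLinearMap.adjoint S' with hB_def
  have hTS : T' ∘L S' = ContinuousLinearMap.id ℂ F := by ext x; simp [hT', hS']
  have hST : S' ∘L T' = ContinuousLinearMap.id ℂ E := by ext x; simp [hT', hS']
  have hadj : ContinuousLinearMap.adjoint S' ∘L ContinuousLinearMap.adjoint T' =
      ContinuousLinearMap.id ℂ F := by
    rw [← ContinuousLinearMap.adjoint_comp, hTS, ContinuousLinearMap.adjoint_id]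
  have hadj' : ContinuousLinearMap.adjoint T' ∘L ContinuousLinearMap.adjoint S' =
      ContinuousLinearMap.id ℂ E := by
    rw [← ContinuousLinearMap.adjoint_comp, hST, ContinuousLinearMap.adjoint_id]
  have hBA : B * A = 1 := by
    show (S' ∘L ContinuousLinearMap.adjoint S') ∘L (ContinuousLinearMap.adjoint T' ∘L T') = 1
    rw [ContinuousLinearMap.comp_assoc,
      ← ContinuousLinearMap.comp_assoc (ContinuousLinearMap.adjoint S'), hadj]
    ext x; simpa using congrFun (congrArg (fun f => f.toFun) hST) x
  have hAB : A * B = 1 := by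
    show (ContinuousLinearMap.adjoint T' ∘L T') ∘L (S' ∘L ContinuousLinearMap.adjoint S') = 1
    rw [ContinuousLinearMap.comp_assoc, ← ContinuousLinearMap.comp_assoc T', hTS]
    ext x; simpa using congrFun (congrArg (fun f => f.toFun) hadj') x
  have hval_inv : R * (R * B) = 1 := by rw [← mul_assoc, hRR, hAB]
  have hlinv : (B * R) * R = 1 := by rw [mul_assoc, hRR, hBA]
  have hcomm : B * R = R * B := by
    calc B * R = (B * R) * (R * (R * B)) := by rw [hval_inv, mul_one]
    _ = ((B * R) * R) * (R * B) := by rw [mul_assoc, mul_assoc, mul_assoc]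
    _ = R * B := by rw [hlinv, one_mul]
  have hinv_val : (R * B) * R = 1 := by rw [← hcomm, hlinv]
  set u : (E →L[ℂ] E)ˣ := ⟨R, R * B, hval_inv, hinv_val⟩ with hu
  set V : E ≃L[ℂ] E := ContinuousLinearEquiv.unitsEquiv ℂ E u⁻¹ with hV
  set full : E ≃L[ℂ] F := V.trans T with hfull
  have hnorm : ∀ x : E, ‖full x‖ = ‖x‖ := by
    intro x
    set y : E := (R * B) x with hy
    have hfx : full x = T' y := by
      simp [hfull, hV, hy, ContinuousLinearEquiv.unitsEquiv_apply, hu, hT']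
    have hRy : R y = x := by
      have : (R * (R * B)) x = (1 : E →L[ℂ] E) x := by rw [hval_inv]
      simpa [ContinuousLinearMap.mul_apply, hy] using this
    have hinner : inner ℂ (T' y) (T' y) = (inner ℂ x x : ℂ) := by
      calc (inner ℂ (T' y) (T' y) : ℂ)
          = inner ℂ ((ContinuousLinearMap.adjoint T') (T' y)) y := by
            rw [ContinuousLinearMap.adjoint_inner_left]
      _ = inner ℂ (R (R y)) y := by
            have h1 : (ContinuousLinearMap.adjoint T') (T' y) = A y := rfl
            have h2 : A y = R (R y) := by rw [← hRR]; rfl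
            rw [h1, h2]
      _ = inner ℂ (R x) y := by rw [hRy]
      _ = inner ℂ x (R y) := by
            conv_lhs => rw [← hadjR]
            rw [ContinuousLinearMap.adjoint_inner_left]
      _ = inner ℂ x x := by rw [hRy]
    have hsq' : ‖T' y‖ ^ 2 = ‖x‖ ^ 2 := by
      rw [← inner_self_eq_norm_sq (𝕜 := ℂ), ← inner_self_eq_norm_sq (𝕜 := ℂ), hinner]
    rw [hfx, ← Real.sqrt_sq (norm_nonneg (T' y)), hsq', Real.sqrt_sq (norm_nonneg x)]
  exact ⟨⟨full.toLinearEquiv, hnorm⟩⟩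

/-- An isometric automorphism maps orthogonal complements to orthogonal complements. -/
theorem aux_map_orthogonal (e : E ≃ₗᵢ[ℂ] E) (s : Submodule ℂ E) :
    Submodule.map (e.toLinearEquiv : E →ₗ[ℂ] E) sᗮ
      = (Submodule.map (e.toLinearEquiv : E →ₗ[ℂ] E) s)ᗮ := by
  ext x
  simp only [Submodule.mem_map, Submodule.mem_orthogonal]
  constructor
  · rintro ⟨y, hy, rfl⟩ u ⟨v, hv, rfl⟩
    simpa [LinearIsometryEquiv.inner_map_map] using hy v hv
  · intro hx
    refine ⟨e.symm x, fun u hu => ?_, by simp⟩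
    have := hx (e u) ⟨u, hu, rfl⟩
    simpa [← LinearIsometryEquiv.inner_map_map e u (e.symm x)] using this

/-- Restriction of an isometric automorphism to a submodule, as an isometry onto the image. -/
noncomputable def auxSubmoduleMap (e : E ≃ₗᵢ[ℂ] E) (s : Submodule ℂ E) :
    s ≃ₗᵢ[ℂ] (Submodule.map (e.toLinearEquiv : E →ₗ[ℂ] E) s) := by
  refine ⟨e.toLinearEquiv.submoduleMap s, fun x => ?_⟩
  have h1 : ((e.toLinearEquiv.submoduleMap s) x : E) = e x := rfl
  rw [show ‖(e.toLinearEquiv.submoduleMap s) x‖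
      = ‖((e.toLinearEquiv.submoduleMap s) x : E)‖ from rfl, h1, e.norm_map]
  rfl

/-- For an idempotent `P`, the range of `P` is continuously linearly equivalent to
`(ker P)ᗮ` via the orthogonal projection. -/
noncomputable def auxRangeEquivKerOrth (P : E →L[ℂ] E) (hP : P * P = P) :
    (LinearMap.range (P : E →ₗ[ℂ] E) : Submodule ℂ E) ≃L[ℂ] ((LinearMap.ker (P : E →ₗ[ℂ] E))ᗮ : Submodule ℂ E) := by
  have hPapp : ∀ x, P (P x) = P x := fun x => by
    have := congrFun (congrArg (fun f : E →L[ℂ] E => f.toFun) hP) x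
    simpa [ContinuousLinearMap.mul_apply] using this
  haveI : CompleteSpace (LinearMap.ker (P : E →ₗ[ℂ] E)) := (ContinuousLinearMap.isClosed_ker P).completeSpace_coe
  have horth : ((LinearMap.ker (P : E →ₗ[ℂ] E))ᗮ)ᗮ = LinearMap.ker (P : E →ₗ[ℂ] E) := Submodule.orthogonal_orthogonal _
  set f : (LinearMap.range (P : E →ₗ[ℂ] E) : Submodule ℂ E) →L[ℂ] ((LinearMap.ker (P : E →ₗ[ℂ] E))ᗮ : Submodule ℂ E) :=
    (Submodule.orthogonalProjection (LinearMap.ker (P : E →ₗ[ℂ] E))ᗮ).comp (Submodule.subtypeL _) with hf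
  have hmem : ∀ z : ((LinearMap.ker (P : E →ₗ[ℂ] E))ᗮ : Submodule ℂ E), P z ∈ LinearMap.range (P : E →ₗ[ℂ] E) :=
    fun z => ⟨z, rfl⟩
  set g : ((LinearMap.ker (P : E →ₗ[ℂ] E))ᗮ : Submodule ℂ E) →L[ℂ] (LinearMap.range (P : E →ₗ[ℂ] E) : Submodule ℂ E) :=
    ContinuousLinearMap.codRestrict (P.comp (Submodule.subtypeL _)) _ hmem with hg
  have hgf : Function.LeftInverse g f := by
    intro x
    apply Subtype.ext
    have hd : (x : E) - Submodule.orthogonalProjection (LinearMap.ker (P : E →ₗ[ℂ] E))ᗮ (x : E) ∈ LinearMap.ker (P : E →ₗ[ℂ] E) := by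
      have := Submodule.sub_starProjection_mem_orthogonal (K := (LinearMap.ker (P : E →ₗ[ℂ] E))ᗮ) (x : E)
      rwa [horth] at this
    have hPx : P (x : E) = (x : E) := by
      obtain ⟨y, hy⟩ := x.2
      rw [← hy]; exact hPapp y
    have hz : P ((x : E) - Submodule.orthogonalProjection (LinearMap.ker (P : E →ₗ[ℂ] E))ᗮ (x : E)) = 0 := hd
    rw [map_sub, sub_eq_zero] at hz
    show P (Submodule.orthogonalProjection (LinearMap.ker (P : E →ₗ[ℂ] E))ᗮ (x : E)) = (x : E)
    rw [← hz, hPx]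
  have hfg : Function.RightInverse g f := by
    intro z
    apply Subtype.ext
    have hd : P (z : E) - (z : E) ∈ ((LinearMap.ker (P : E →ₗ[ℂ] E))ᗮ)ᗮ := by
      rw [horth]
      simp [LinearMap.mem_ker, map_sub, hPapp]
    have h0 : Submodule.orthogonalProjection (LinearMap.ker (P : E →ₗ[ℂ] E))ᗮ (P (z : E) - (z : E)) = 0 :=
      Submodule.orthogonalProjectionOnto_apply_of_mem_orthogonal hd
    rw [map_sub, sub_eq_zero] at h0
    have h3 : Submodule.orthogonalProjection (LinearMap.ker (P : E →ₗ[ℂ] E))ᗮ ((z : E)) = z :=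
      Submodule.orthogonalProjection_mem_subspace_eq_self z
    show (Submodule.orthogonalProjection (LinearMap.ker (P : E →ₗ[ℂ] E))ᗮ (P (z : E)) : E) = (z : E)
    rw [h0, h3]
  exact ContinuousLinearEquiv.equivOfInverse f g hgf hfg

end Aux

theorem stmt_6 (P : H →L[ℂ] H) (hP : P * P = P)
    (h : ∃ J, IsSymmetry J ∧ J * P * J = 1 - P) :
    Nonempty ((LinearMap.range (P : H →ₗ[ℂ] H) : Submodule ℂ H) ≃ₗᵢ[ℂ]
      ((LinearMap.range (P : H →ₗ[ℂ] H))ᗮ : Submodule ℂ H)) := by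
  obtain ⟨J, ⟨hJsa, hJ2⟩, hJP⟩ := h
  have happ : ∀ (S : H →L[ℂ] H) (x : H), (S * S) x = S (S x) := fun S x => rfl
  have hPapp : ∀ x, P (P x) = P x := fun x => by
    have := congrFun (congrArg (fun f : H →L[ℂ] H => f.toFun) hP) x
    simpa [ContinuousLinearMap.mul_apply] using this
  have hJapp : ∀ x, J (J x) = x := fun x => by
    have := congrFun (congrArg (fun f : H →L[ℂ] H => f.toFun) hJ2) x
    simpa [ContinuousLinearMap.mul_apply] using this
  -- J as a linear isometric automorphism
  have hadjJ : ContinuousLinearMap.adjoint J = J := by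
    rw [← ContinuousLinearMap.star_eq_adjoint]; exact hJsa.star_eq
  have hJnorm : ∀ x, ‖J x‖ = ‖x‖ := by
    intro x
    have hin : (inner ℂ (J x) (J x) : ℂ) = inner ℂ x x := by
      conv_lhs => rw [← ContinuousLinearMap.adjoint_inner_left, hadjJ, hJapp]
    have hsq : ‖J x‖ ^ 2 = ‖x‖ ^ 2 := by
      rw [← inner_self_eq_norm_sq (𝕜 := ℂ), ← inner_self_eq_norm_sq (𝕜 := ℂ), hin]
    rw [← Real.sqrt_sq (norm_nonneg (J x)), hsq, Real.sqrt_sq (norm_nonneg x)]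
  set uJ : (H →L[ℂ] H)ˣ := ⟨J, J, hJ2, hJ2⟩ with huJ
  set eJ : H ≃ₗᵢ[ℂ] H :=
    ⟨(ContinuousLinearEquiv.unitsEquiv ℂ H uJ).toLinearEquiv, fun x => hJnorm x⟩ with heJ
  have heJ_apply : ∀ x, eJ x = J x := fun x => rfl
  -- operator identities
  have hJP1 : J * P = (1 - P) * J := by
    calc J * P = (J * P) * (J * J) := by rw [hJ2, mul_one]
    _ = (J * P * J) * J := by rw [mul_assoc, mul_assoc, mul_assoc]
    _ = (1 - P) * J := by rw [hJP]
  have hJP2 : J * (1 - P) = P * J := by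
    rw [mul_sub, mul_one, hJP1, sub_mul, one_mul, sub_sub_cancel]
  -- J maps range P onto ker P
  have hJP1app : ∀ x, J (P x) = J x - P (J x) := fun x => by
    have := congrFun (congrArg (fun f : H →L[ℂ] H => f.toFun) hJP1) x
    simpa [ContinuousLinearMap.mul_apply, ContinuousLinearMap.sub_apply] using this
  have hJP2app : ∀ x, J x - J (P x) = P (J x) := fun x => by
    have := congrFun (congrArg (fun f : H →L[ℂ] H => f.toFun) hJP2) x
    simpa [ContinuousLinearMap.mul_apply, ContinuousLinearMap.sub_apply, map_sub] using this
  have hmap : Submodule.map (eJ.toLinearEquiv : H →ₗ[ℂ] H) (LinearMap.range (P : H →ₗ[ℂ] H))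
      = LinearMap.ker (P : H →ₗ[ℂ] H) := by
    ext x
    simp only [Submodule.mem_map, LinearMap.mem_range, LinearMap.mem_ker]
    constructor
    · rintro ⟨y, ⟨w, rfl⟩, rfl⟩
      show P (J (P w)) = 0
      rw [hJP1app, map_sub, hPapp, sub_self]
    · intro hx
      refine ⟨J x, ⟨J x, ?_⟩, ?_⟩
      · show P (J x) = J x
        rw [← hJP2app, show P x = 0 from hx, map_zero, sub_zero]
      · show J (J x) = x
        exact hJapp x
  have hmap_orth : Submodule.map (eJ.toLinearEquiv : H →ₗ[ℂ] H) ((LinearMap.range (P : H →ₗ[ℂ] H))ᗮ)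
      = (LinearMap.ker (P : H →ₗ[ℂ] H))ᗮ := by
    rw [aux_map_orthogonal eJ, hmap]
  have e2 : ((LinearMap.range (P : H →ₗ[ℂ] H))ᗮ : Submodule ℂ H) ≃ₗᵢ[ℂ]
      ((LinearMap.ker (P : H →ₗ[ℂ] H))ᗮ : Submodule ℂ H) :=
    (auxSubmoduleMap eJ _).trans (LinearIsometryEquiv.ofEq _ _ hmap_orth)
  have hker1P : LinearMap.range (P : H →ₗ[ℂ] H) = LinearMap.ker ((1 - P : H →L[ℂ] H) : H →ₗ[ℂ] H) := by
    ext x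
    simp only [LinearMap.mem_range, LinearMap.mem_ker]
    constructor
    · rintro ⟨y, rfl⟩
      rw [ContinuousLinearMap.coe_coe, ContinuousLinearMap.sub_apply]
      simp [hPapp]
    · intro hx
      rw [ContinuousLinearMap.coe_coe, ContinuousLinearMap.sub_apply] at hx
      simp only [ContinuousLinearMap.one_apply] at hx
      exact ⟨x, (sub_eq_zero.mp hx).symm⟩
  haveI : CompleteSpace (LinearMap.range (P : H →ₗ[ℂ] H) : Submodule ℂ H) := by
    rw [hker1P]
    exact (ContinuousLinearMap.isClosed_ker _).completeSpace_coe
  obtain ⟨i⟩ := aux_nonempty_isometry_of_equiv (auxRangeEquivKerOrth P hP)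
  exact ⟨i.trans e2.symm⟩
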